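/- Let w₁,…,w_{k+N} be a straight-line computation where w₁,…,w_k are inputs and each subsequent wⱼ is obtained from earlier values via addition, subtraction, multiplication, or division, and suppose a recursive analysis certifies that w is affine in input x with symbolic coefficients (p, q) computed by: base cases (1,0) for w = x and (0, w) for other inputs/constants, sum/difference of coefficients for ADD/SUB, and the appropriate product/quotient rules for MUL/DIV when one factor (resp. the divisor) has zero slope. Then indeed w = p·x + q as functions of the inputs, and p, q do not depend on x. -/
import Mathlib


/-- Straight-line computations built from inputs, constants and the primitive
operations ADD, SUB, MUL, DIV. -/
inductive Expr (k : ℕ) where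
  | input : Fin k → Expr k
  | const : ℝ → Expr k
  | add : Expr k → Expr k → Expr k
  | sub : Expr k → Expr k → Expr k
  | mul : Expr k → Expr k → Expr k
  | div : Expr k → Expr k → Expr k

noncomputable def Expr.eval {k : ℕ} (env : Fin k → ℝ) : Expr k → ℝ
  | .input i => env i
  | .const r => r
  | .add a b => a.eval env + b.eval env
  | .sub a b => a.eval env - b.eval env
  | .mul a b => a.eval env * b.eval env
  | .div a b => a.eval env / b.eval env

/-- The expression does not (syntactically) use input x. -/
def Expr.NoDep {k : ℕ} (x : Fin k) : Expr k → Prop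
  | .input i => i ≠ x
  | .const _ => True
  | .add a b => a.NoDep x ∧ b.NoDep x
  | .sub a b => a.NoDep x ∧ b.NoDep x
  | .mul a b => a.NoDep x ∧ b.NoDep x
  | .div a b => a.NoDep x ∧ b.NoDep x

/-- The recursive AFFINE_COEFF analysis certifies that `w` is affine in input
`x` with symbolic slope `p` and intercept `q`: base cases (1,0) for w = x and
(0,w) for other inputs and expressions not depending on x; sum/difference of
coefficients for ADD/SUB; product/quotient rules for MUL/DIV when one factor
(resp. the divisor) has zero slope. -/
inductive AffineCoeff {k : ℕ} (x : Fin k) : Expr k → Expr k → Expr k → Prop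
  | self : AffineCoeff x (.input x) (.const 1) (.const 0)
  | inputOther (i : Fin k) (h : i ≠ x) :
      AffineCoeff x (.input i) (.const 0) (.input i)
  | const (r : ℝ) : AffineCoeff x (.const r) (.const 0) (.const r)
  | noDep (w : Expr k) (h : w.NoDep x) : AffineCoeff x w (.const 0) w
  | add {a b p₁ q₁ p₂ q₂ : Expr k} :
      AffineCoeff x a p₁ q₁ → AffineCoeff x b p₂ q₂ →
      AffineCoeff x (.add a b) (.add p₁ p₂) (.add q₁ q₂)
  | sub {a b p₁ q₁ p₂ q₂ : Expr k} :
      AffineCoeff x a p₁ q₁ → AffineCoeff x b p₂ q₂ →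
      AffineCoeff x (.sub a b) (.sub p₁ p₂) (.sub q₁ q₂)
  | mulRightConst {a b p₁ q₁ q₂ : Expr k} :
      AffineCoeff x a p₁ q₁ → AffineCoeff x b (.const 0) q₂ →
      AffineCoeff x (.mul a b) (.mul p₁ q₂) (.mul q₁ q₂)
  | mulLeftConst {a b q₁ p₂ q₂ : Expr k} :
      AffineCoeff x a (.const 0) q₁ → AffineCoeff x b p₂ q₂ →
      AffineCoeff x (.mul a b) (.mul q₁ p₂) (.mul q₁ q₂)
  | div {a b p₁ q₁ q₂ : Expr k} :
      AffineCoeff x a p₁ q₁ → AffineCoeff x b (.const 0) q₂ →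
      AffineCoeff x (.div a b) (.div p₁ q₂) (.div q₁ q₂)


theorem Expr.eval_noDep {k : ℕ} (x : Fin k) (w : Expr k) (h : w.NoDep x)
    (env : Fin k → ℝ) (t : ℝ) :
    w.eval (Function.update env x t) = w.eval env := by
  induction w with
  | input i => show Function.update env x t i = env i; exact Function.update_of_ne h _ _
  | const r => rfl
  | add a b iha ihb => exact congrArg₂ (·+·) (iha h.1) (ihb h.2)
  | sub a b iha ihb => exact congrArg₂ (·-·) (iha h.1) (ihb h.2)
  | mul a b iha ihb => exact congrArg₂ (·*·) (iha h.1) (ihb h.2)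
  | div a b iha ihb => exact congrArg₂ (·/·) (iha h.1) (ihb h.2)

/-- Correctness of AFFINE_COEFF: if the analysis certifies coefficients (p, q)
for w with respect to input x, then w = p·x + q as functions of the inputs, and
the values of p and q do not depend on the input x. -/
theorem affineCoeff_correct {k : ℕ} (x : Fin k) (w p q : Expr k)
    (h : AffineCoeff x w p q) :
    (∀ env : Fin k → ℝ, w.eval env = p.eval env * env x + q.eval env)
    ∧ (∀ (env : Fin k → ℝ) (t : ℝ),
        p.eval (Function.update env x t) = p.eval env
        ∧ q.eval (Function.update env x t) = q.eval env) := by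
  induction h with
  | self => simp [Expr.eval]
  | inputOther i hi =>
      refine ⟨fun env => by simp [Expr.eval], fun env t => ?_⟩
      simp [Expr.eval, Function.update_of_ne hi]
  | const r => exact ⟨fun env => by simp [Expr.eval], fun env t => by simp [Expr.eval]⟩
  | noDep w hw =>
      exact ⟨fun env => by simp [Expr.eval],
        fun env t => ⟨rfl, Expr.eval_noDep x w hw env t⟩⟩
  | add ha hb iha ihb =>
      refine ⟨fun env => ?_, fun env t => ?_⟩
      · simp only [Expr.eval, (iha.1 env), (ihb.1 env)]; ring
      · exact ⟨by simp [Expr.eval, (iha.2 env t).1, (ihb.2 env t).1],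
          by simp [Expr.eval, (iha.2 env t).2, (ihb.2 env t).2]⟩
  | sub ha hb iha ihb =>
      refine ⟨fun env => ?_, fun env t => ?_⟩
      · simp only [Expr.eval, (iha.1 env), (ihb.1 env)]; ring
      · exact ⟨by simp [Expr.eval, (iha.2 env t).1, (ihb.2 env t).1],
          by simp [Expr.eval, (iha.2 env t).2, (ihb.2 env t).2]⟩
  | mulRightConst ha hb iha ihb =>
      refine ⟨fun env => ?_, fun env t => ?_⟩
      · have h1 := iha.1 env; have h2 := ihb.1 env
        simp only [Expr.eval] at h1 h2 ⊢
        rw [h1, h2]; ring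
      · exact ⟨by simp [Expr.eval, (iha.2 env t).1, (ihb.2 env t).2],
          by simp [Expr.eval, (iha.2 env t).2, (ihb.2 env t).2]⟩
  | mulLeftConst ha hb iha ihb =>
      refine ⟨fun env => ?_, fun env t => ?_⟩
      · have h1 := iha.1 env; have h2 := ihb.1 env
        simp only [Expr.eval] at h1 h2 ⊢
        rw [h1, h2]; ring
      · exact ⟨by simp [Expr.eval, (iha.2 env t).2, (ihb.2 env t).1],
          by simp [Expr.eval, (iha.2 env t).2, (ihb.2 env t).2]⟩
  | div ha hb iha ihb =>
      refine ⟨fun env => ?_, fun env t => ?_⟩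
      · have h1 := iha.1 env; have h2 := ihb.1 env
        simp only [Expr.eval] at h1 h2 ⊢
        rw [h1, h2, zero_mul, zero_add, add_div, mul_div_right_comm]
      · exact ⟨by simp [Expr.eval, (iha.2 env t).1, (ihb.2 env t).2],
          by simp [Expr.eval, (iha.2 env t).2, (ihb.2 env t).2]⟩
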